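/- Let q ≥ 2, h ≥ 1 and u ≥ 1 be integers with q^u ≥ 2hq(6q)^h, and let m₀, m₁, m₂, m₃ be integers with q^(u-1) ≤ m₀, m₂, m₃ < q^u and 1 ≤ m₁ < q^u/(hq(6q)^h). Write t(x) = m₃x³ + m₂x² − m₁x + m₀ and let c₀, …, c_{3h} be the coefficients of t(x)^h. Set M = Σ_{i=3}^{3h} s_q(c_i) + s_q(c₂ − 1) − s_q(|c₁| − 1) + s_q(c₀). Then for every integer k > hu + 2h one has s_q(t(q^k)^h) = k(q − 1) + M; in particular M does not depend on k. -/

import Mathlib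

open Polynomial

/-- `digitSum q n` is the sum of digits of `n` in base `q`. -/
def digitSum (q n : ℕ) : ℕ := (Nat.digits q n).sum

lemma digitSum_eq (q n : ℕ) (hq : 2 ≤ q) : digitSum q n = n % q + digitSum q (n / q) := by
  rcases Nat.eq_zero_or_pos n with h | h
  · simp [h, digitSum]
  · rw [digitSum, Nat.digits_def' (by omega : 1 < q) h]
    simp [digitSum]

lemma digitSum_add_base_mul (q c m : ℕ) (hq : 2 ≤ q) (hc : c < q) :
    digitSum q (c + q * m) = c + digitSum q m := by
  rw [digitSum_eq q _ hq, Nat.add_mul_mod_self_left, Nat.mod_eq_of_lt hc,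
    Nat.add_mul_div_left _ _ (by omega : 0 < q), Nat.div_eq_of_lt hc, Nat.zero_add]

lemma digitSum_add_pow_mul (q : ℕ) (hq : 2 ≤ q) (j : ℕ) :
    ∀ a b : ℕ, a < q ^ j → digitSum q (a + q ^ j * b) = digitSum q a + digitSum q b := by
  induction j with
  | zero =>
    intro a b ha
    simp only [pow_zero, Nat.lt_one_iff] at ha
    subst ha; simp [digitSum]
  | succ j ih =>
    intro a b ha
    have h1 : a % q < q := Nat.mod_lt _ (by omega)
    have h2 : a / q < q ^ j := by
      rw [Nat.div_lt_iff_lt_mul (by omega : 0 < q)]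
      calc a < q ^ (j+1) := ha
        _ = q ^ j * q := by ring
    have e : a + q ^ (j+1) * b = a % q + q * (a / q + q ^ j * b) := by
      have e3 := Nat.mod_add_div a q
      calc a + q ^ (j+1) * b = (a % q + q * (a / q)) + q * (q ^ j * b) := by rw [e3]; ring
        _ = a % q + q * (a / q + q ^ j * b) := by ring
    rw [e, digitSum_add_base_mul q _ _ hq h1, ih _ _ h2, digitSum_eq q a hq]
    omega

lemma digitSum_compl (q : ℕ) (hq : 2 ≤ q) (k : ℕ) :
    ∀ a : ℕ, a < q ^ k → digitSum q (q ^ k - 1 - a) + digitSum q a = k * (q - 1) := by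
  induction k with
  | zero =>
    intro a ha
    simp only [pow_zero, Nat.lt_one_iff] at ha
    subst ha; simp [digitSum]
  | succ k ih =>
    intro a ha
    have h1 : a % q < q := Nat.mod_lt _ (by omega)
    have h2 : a / q < q ^ k := by
      rw [Nat.div_lt_iff_lt_mul (by omega : 0 < q)]
      calc a < q ^ (k+1) := ha
        _ = q ^ k * q := by ring
    have e1 : q * (q ^ k - 1 - a / q) = q * q ^ k - q - q * (a / q) := by
      rw [Nat.mul_sub, Nat.mul_sub, Nat.mul_one]
    have e2 : q ^ (k+1) = q * q ^ k := by ring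
    have e3 : q * (a / q) + a % q = a := Nat.div_add_mod a q
    have e4 : q * (a / q) + q ≤ q * q ^ k := by
      have h5 : a / q + 1 ≤ q ^ k := h2
      calc q * (a / q) + q = q * (a / q + 1) := by ring
        _ ≤ q * q ^ k := Nat.mul_le_mul_left q h5
    have key : q ^ (k+1) - 1 - a = (q - 1 - a % q) + q * (q ^ k - 1 - a / q) := by omega
    rw [key, digitSum_add_base_mul q _ _ hq (by omega), digitSum_eq q a hq]
    have e5 := ih (a / q) h2
    have e6 : (k+1) * (q - 1) = k * (q - 1) + (q - 1) := by ring
    omega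

lemma digitSum_blocks (q k : ℕ) (hq : 2 ≤ q) :
    ∀ (m : ℕ) (f : ℕ → ℕ), (∀ i, f i < q ^ k) →
      digitSum q (∑ i ∈ Finset.range m, f i * q ^ (i * k)) =
      ∑ i ∈ Finset.range m, digitSum q (f i) := by
  intro m
  induction m with
  | zero => intro f hf; simp [digitSum]
  | succ m ih =>
    intro f hf
    have e : ∑ i ∈ Finset.range (m+1), f i * q ^ (i * k)
        = f 0 + q ^ k * ∑ i ∈ Finset.range m, f (i+1) * q ^ (i * k) := by
      rw [Finset.sum_range_succ' (fun i => f i * q ^ (i * k)) m, Finset.mul_sum]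
      simp only [Nat.zero_mul, pow_zero, Nat.mul_one]
      rw [Nat.add_comm]
      congr 1
      refine Finset.sum_congr rfl fun i _ => ?_
      rw [show (i+1) * k = k + i * k by ring, pow_add]
      ring
    rw [e, digitSum_add_pow_mul q hq k _ _ (hf 0), ih (fun i => f (i+1)) (fun i => hf (i+1)),
      Finset.sum_range_succ' (fun i => digitSum q (f i)) m]
    omega

lemma coeff_mul_nonneg (p r : Polynomial ℤ) (hp : ∀ i, 0 ≤ p.coeff i)
    (hr : ∀ i, 0 ≤ r.coeff i) (i : ℕ) : 0 ≤ (p * r).coeff i := by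
  rw [coeff_mul]
  exact Finset.sum_nonneg fun x _ => mul_nonneg (hp _) (hr _)

lemma coeff_pow_nonneg (p : Polynomial ℤ) (hp : ∀ i, 0 ≤ p.coeff i) (n i : ℕ) :
    0 ≤ (p ^ n).coeff i := by
  induction n generalizing i with
  | zero => simp [coeff_one]; split <;> simp
  | succ n ih =>
    rw [pow_succ]
    exact coeff_mul_nonneg _ _ ih hp i

lemma coeff_le_eval_one (p : Polynomial ℤ) (hp : ∀ i, 0 ≤ p.coeff i) (i : ℕ) :
    p.coeff i ≤ p.eval 1 := by
  rw [Polynomial.eval_eq_sum_range]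
  by_cases h : i < p.natDegree + 1
  · calc p.coeff i = p.coeff i * 1 ^ i := by ring
      _ ≤ _ := Finset.single_le_sum (f := fun j => p.coeff j * 1 ^ j)
          (fun j _ => by simpa using hp j) (Finset.mem_range.mpr h)
  · rw [p.coeff_eq_zero_of_natDegree_lt (by omega)]
    exact Finset.sum_nonneg fun j _ => by simpa using hp j

lemma le_coeff_mul (p r : Polynomial ℤ) (hp : ∀ i, 0 ≤ p.coeff i)
    (hr : ∀ i, 0 ≤ r.coeff i) (i j : ℕ) :
    p.coeff i * r.coeff j ≤ (p * r).coeff (i + j) := by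
  rw [coeff_mul]
  exact Finset.single_le_sum (f := fun x : ℕ × ℕ => p.coeff x.1 * r.coeff x.2)
    (fun x _ => mul_nonneg (hp _) (hr _))
    (show ((i, j) : ℕ × ℕ) ∈ Finset.HasAntidiagonal.antidiagonal (i + j) from Finset.HasAntidiagonal.mem_antidiagonal.mpr rfl)

lemma le_coeff_pow (p : Polynomial ℤ) (hp : ∀ i, 0 ≤ p.coeff i) (e n : ℕ) :
    p.coeff e ^ n ≤ (p ^ n).coeff (e * n) := by
  induction n with
  | zero => simp
  | succ n ih =>
    rw [pow_succ, pow_succ, show e * (n + 1) = e * n + e by ring]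
    calc p.coeff e ^ n * p.coeff e ≤ (p ^ n).coeff (e * n) * p.coeff e := by
          apply mul_le_mul_of_nonneg_right ih (hp e)
      _ ≤ _ := le_coeff_mul _ _ (coeff_pow_nonneg p hp n) hp _ _

lemma coeff_one_pow_eq_zero (p : Polynomial ℤ) (hp : p.coeff 1 = 0) (n : ℕ) :
    (p ^ n).coeff 1 = 0 := by
  induction n with
  | zero => simp [coeff_one]
  | succ n ih =>
    rw [pow_succ, coeff_mul]
    rw [show (1 : ℕ) = 0 + 1 from rfl, Finset.Nat.sum_antidiagonal_eq_sum_range_succ_mk]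
    simp [Finset.sum_range_succ, ih, hp]

set_option maxHeartbeats 3200000 in
theorem digitSum_of_t_pow_h_at_large_power
    (q h u : ℕ) (hq : 2 ≤ q) (hh : 1 ≤ h) (hu : 1 ≤ u)
    (hqu : 2 * h * q * (6 * q) ^ h ≤ q ^ u)
    (m₀ m₁ m₂ m₃ : ℤ)
    (hm₀ : (q : ℤ) ^ (u - 1) ≤ m₀) (hm₀' : m₀ < (q : ℤ) ^ u)
    (hm₂ : (q : ℤ) ^ (u - 1) ≤ m₂) (hm₂' : m₂ < (q : ℤ) ^ u)
    (hm₃ : (q : ℤ) ^ (u - 1) ≤ m₃) (hm₃' : m₃ < (q : ℤ) ^ u)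
    (hm₁ : 1 ≤ m₁)
    (hm₁' : (m₁ : ℝ) < (q : ℝ) ^ u / ((h : ℝ) * q * (6 * q : ℝ) ^ h))
    (t : Polynomial ℤ)
    (ht : t = C m₃ * X ^ 3 + C m₂ * X ^ 2 - C m₁ * X + C m₀)
    (M : ℤ)
    (hM : M = (∑ i ∈ Finset.Icc 3 (3 * h), (digitSum q ((t ^ h).coeff i).toNat : ℤ))
        + (digitSum q ((t ^ h).coeff 2 - 1).toNat : ℤ)
        - (digitSum q (|(t ^ h).coeff 1| - 1).toNat : ℤ)
        + (digitSum q ((t ^ h).coeff 0).toNat : ℤ)) :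
    ∀ k : ℕ, h * u + 2 * h < k →
      (digitSum q ((t.eval ((q : ℤ) ^ k)) ^ h).toNat : ℤ) = k * ((q : ℤ) - 1) + M := by
  -- basic positivity facts
  have hqZ : (2:ℤ) ≤ (q:ℤ) := by exact_mod_cast hq
  have hq1 : (1:ℤ) ≤ (q:ℤ) ^ (u-1) := one_le_pow₀ (by linarith)
  have hm₀0 : (1:ℤ) ≤ m₀ := le_trans hq1 hm₀
  have hm₂0 : (1:ℤ) ≤ m₂ := le_trans hq1 hm₂
  have hm₃0 : (1:ℤ) ≤ m₃ := le_trans hq1 hm₃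
  have hm₁0 : (0:ℤ) ≤ m₁ := by linarith
  have hhZ : (1:ℤ) ≤ (h:ℤ) := by exact_mod_cast hh
  -- m₁ bounds
  have hD : (0:ℝ) < (h:ℝ) * q * (6 * q : ℝ) ^ h := by positivity
  have hkey : m₁ * ((h:ℤ) * q * (6 * q) ^ h) < (q:ℤ) ^ u := by
    have h1 : (m₁:ℝ) * ((h:ℝ) * q * (6 * q : ℝ) ^ h) < (q:ℝ) ^ u :=
      (lt_div_iff₀ hD).mp hm₁'
    exact_mod_cast h1
  have hm₁q : m₁ < (q:ℤ) ^ u := by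
    have h6 : (1:ℤ) ≤ (6 * q) ^ h := one_le_pow₀ (by linarith)
    have hhq : (1:ℤ) ≤ (h:ℤ) * q := by
      have := mul_le_mul hhZ (by linarith : (1:ℤ) ≤ (q:ℤ)) (by norm_num) (by linarith)
      linarith
    have hD1 : (1:ℤ) ≤ (h:ℤ) * q * (6 * q) ^ h := by
      have := mul_le_mul hhq h6 (by norm_num) (by linarith)
      linarith
    nlinarith
  -- the auxiliary polynomial s
  obtain ⟨s, hs⟩ : ∃ s : Polynomial ℤ, s = C m₃ * X ^ 3 + C m₂ * X ^ 2 + C m₀ := ⟨_, rfl⟩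
  have hsc : ∀ n, s.coeff n =
      (if n = 3 then m₃ else 0) + (if n = 2 then m₂ else 0) + (if n = 0 then m₀ else 0) := by
    intro n
    rw [hs, coeff_add, coeff_add, coeff_C_mul, coeff_C_mul, coeff_X_pow, coeff_X_pow, coeff_C]
    simp only [mul_ite, mul_one, mul_zero]
  have hs0 : s.coeff 0 = m₀ := by rw [hsc]; norm_num
  have hs1 : s.coeff 1 = 0 := by rw [hsc]; norm_num
  have hs2 : s.coeff 2 = m₂ := by rw [hsc]; norm_num
  have hs3 : s.coeff 3 = m₃ := by rw [hsc]; norm_num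
  have hsnn : ∀ i, 0 ≤ s.coeff i := by
    intro i
    rw [hsc]
    split_ifs <;> first | omega | linarith
  have hsev : s.eval 1 = m₃ + m₂ + m₀ := by simp [hs]
  have hsev_nn : 0 ≤ s.eval 1 := by rw [hsev]; linarith
  have hA_le : ∀ m l : ℕ, (s ^ m).coeff l ≤ 3 ^ m * (q:ℤ) ^ (u * m) := by
    intro m l
    calc (s ^ m).coeff l ≤ (s ^ m).eval 1 :=
          coeff_le_eval_one _ (coeff_pow_nonneg s hsnn m) l
      _ = (s.eval 1) ^ m := by rw [eval_pow]
      _ ≤ (3 * (q:ℤ)^u) ^ m := by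
          apply pow_le_pow_left₀ hsev_nn
          rw [hsev]; linarith
      _ = 3 ^ m * (q:ℤ) ^ (u * m) := by rw [mul_pow, ← pow_mul]
  have hlow : ∀ i, 2 ≤ i → i ≤ 3 * h → (q:ℤ) ^ ((u-1) * h) ≤ (s ^ h).coeff i := by
    intro i hi2 hi3
    obtain ⟨a, b, hab, hle⟩ : ∃ a b, 3 * a + 2 * b = i ∧ a + b ≤ h := by
      have h3 : i % 3 = 0 ∨ i % 3 = 1 ∨ i % 3 = 2 := by omega
      rcases h3 with h3 | h3 | h3
      · exact ⟨i / 3, 0, by omega, by omega⟩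
      · exact ⟨i / 3 - 1, 2, by omega, by omega⟩
      · exact ⟨i / 3, 1, by omega, by omega⟩
    set c := h - a - b with hc
    have hh' : h = a + (b + c) := by omega
    have e1 : (s ^ h).coeff i = (s ^ a * (s ^ b * s ^ c)).coeff (3 * a + (2 * b + 0 * c)) := by
      rw [hh', pow_add, pow_add]
      congr 1
      omega
    rw [e1]
    have nna := coeff_pow_nonneg s hsnn a
    have nnb := coeff_pow_nonneg s hsnn b
    have nnc := coeff_pow_nonneg s hsnn c
    have nnbc : ∀ i, 0 ≤ (s ^ b * s ^ c).coeff i := fun i =>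
      coeff_mul_nonneg _ _ nnb nnc i
    have l3 : (q:ℤ)^((u-1)*a) ≤ (s ^ a).coeff (3 * a) := by
      calc (q:ℤ)^((u-1)*a) = ((q:ℤ)^(u-1))^a := by rw [pow_mul]
        _ ≤ m₃ ^ a := pow_le_pow_left₀ (by positivity) hm₃ a
        _ = (s.coeff 3) ^ a := by rw [hs3]
        _ ≤ (s ^ a).coeff (3 * a) := by
            have := le_coeff_pow s hsnn 3 a
            simpa [Nat.mul_comm] using this
    have l2 : (q:ℤ)^((u-1)*b) ≤ (s ^ b).coeff (2 * b) := by
      calc (q:ℤ)^((u-1)*b) = ((q:ℤ)^(u-1))^b := by rw [pow_mul]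
        _ ≤ m₂ ^ b := pow_le_pow_left₀ (by positivity) hm₂ b
        _ = (s.coeff 2) ^ b := by rw [hs2]
        _ ≤ (s ^ b).coeff (2 * b) := by
            have := le_coeff_pow s hsnn 2 b
            simpa [Nat.mul_comm] using this
    have l0 : (q:ℤ)^((u-1)*c) ≤ (s ^ c).coeff 0 := by
      calc (q:ℤ)^((u-1)*c) = ((q:ℤ)^(u-1))^c := by rw [pow_mul]
        _ ≤ m₀ ^ c := pow_le_pow_left₀ (by positivity) hm₀ c
        _ = (s.coeff 0) ^ c := by rw [hs0]
        _ ≤ (s ^ c).coeff 0 := by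
            have := le_coeff_pow s hsnn 0 c
            simpa using this
    have lbc : (q:ℤ)^((u-1)*b) * (q:ℤ)^((u-1)*c) ≤ (s ^ b * s ^ c).coeff (2 * b + 0) := by
      calc (q:ℤ)^((u-1)*b) * (q:ℤ)^((u-1)*c) ≤ (s ^ b).coeff (2*b) * (s ^ c).coeff 0 :=
            mul_le_mul l2 l0 (by positivity) (le_trans (by positivity) l2)
        _ ≤ _ := le_coeff_mul _ _ nnb nnc _ _
    calc (q:ℤ) ^ ((u-1) * h) = (q:ℤ)^((u-1)*a) * ((q:ℤ)^((u-1)*b) * (q:ℤ)^((u-1)*c)) := by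
          rw [← pow_add, ← pow_add]
          congr 1
          rw [hh']; ring
      _ ≤ (s ^ a).coeff (3*a) * ((s ^ b * s ^ c).coeff (2 * b + 0)) := by
          apply mul_le_mul l3 lbc (by positivity) (le_trans (by positivity) l3)
      _ ≤ (s ^ a * (s ^ b * s ^ c)).coeff (3 * a + (2 * b + 0)) :=
          le_coeff_mul _ _ nna nnbc _ _
      _ = (s ^ a * (s ^ b * s ^ c)).coeff (3 * a + (2 * b + 0 * c)) := by norm_num
  -- the coefficient expansion
  have hcoeff : ∀ i, (t ^ h).coeff i = ∑ j ∈ Finset.range (h+1),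
      (if j ≤ i then (s ^ (h-j)).coeff (i-j) * ((-m₁)^j * (h.choose j : ℤ)) else 0) := by
    intro i
    have hts : t = C (-m₁) * X + s := by rw [ht, hs, C_neg]; ring
    rw [hts, add_pow, finset_sum_coeff]
    refine Finset.sum_congr rfl fun j hj => ?_
    have e : (C (-m₁) * X) ^ j * s ^ (h - j) * ((h.choose j : ℕ) : Polynomial ℤ)
        = (s ^ (h-j) * C ((-m₁)^j * (h.choose j : ℤ))) * X ^ j := by
      rw [mul_pow, ← C_pow, ← C_eq_natCast, C_mul]
      ring
    rw [e, coeff_mul_X_pow', coeff_mul_C]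
  -- binomial sum
  have hbin : ((4:ℤ))^h = ∑ j ∈ Finset.range (h+1), 3^(h-j) * (h.choose j : ℤ) := by
    have := add_pow (1:ℤ) 3 h
    norm_num at this
    exact this
  -- upper bound for coefficients
  have hterm_le : ∀ i j, j ≤ h →
      |if j ≤ i then (s ^ (h-j)).coeff (i-j) * ((-m₁)^j * (h.choose j : ℤ)) else 0|
        ≤ 3^(h-j) * (h.choose j : ℤ) * ((q:ℤ)^(u*(h-j)) * m₁^j) := by
    intro i j hjh
    have hch : (0:ℤ) ≤ (h.choose j : ℤ) := by positivity
    have hm₁p : (0:ℤ) ≤ m₁ ^ j := by positivity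
    split_ifs with hji
    · rw [abs_mul, abs_mul, abs_pow, abs_neg, abs_of_nonneg hm₁0, abs_of_nonneg hch,
        abs_of_nonneg (coeff_pow_nonneg s hsnn _ _)]
      calc (s ^ (h-j)).coeff (i-j) * (m₁^j * (h.choose j : ℤ))
          ≤ (3 ^ (h-j) * (q:ℤ)^(u*(h-j))) * (m₁^j * (h.choose j : ℤ)) := by
            apply mul_le_mul_of_nonneg_right (hA_le _ _) (by positivity)
        _ = 3^(h-j) * (h.choose j : ℤ) * ((q:ℤ)^(u*(h-j)) * m₁^j) := by ring
    · simp
      positivity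
  have hc_bound : ∀ i, |(t ^ h).coeff i| ≤ 4^h * (q:ℤ)^(u*h) := by
    intro i
    rw [hcoeff i]
    calc |∑ j ∈ Finset.range (h+1), _| ≤ ∑ j ∈ Finset.range (h+1),
          |if j ≤ i then (s ^ (h-j)).coeff (i-j) * ((-m₁)^j * (h.choose j : ℤ)) else 0| :=
          Finset.abs_sum_le_sum_abs _ _
      _ ≤ ∑ j ∈ Finset.range (h+1), 3^(h-j) * (h.choose j : ℤ) * (q:ℤ)^(u*h) := by
          apply Finset.sum_le_sum
          intro j hj
          have hjh : j ≤ h := by simpa using Finset.mem_range_succ_iff.mp hj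
          calc _ ≤ 3^(h-j) * (h.choose j : ℤ) * ((q:ℤ)^(u*(h-j)) * m₁^j) := hterm_le i j hjh
            _ ≤ 3^(h-j) * (h.choose j : ℤ) * ((q:ℤ)^(u*(h-j)) * ((q:ℤ)^u)^j) := by
                apply mul_le_mul_of_nonneg_left _ (by positivity)
                apply mul_le_mul_of_nonneg_left _ (by positivity)
                exact pow_le_pow_left₀ hm₁0 (le_of_lt hm₁q) j
            _ = 3^(h-j) * (h.choose j : ℤ) * (q:ℤ)^(u*h) := by
                rw [← pow_mul, ← pow_add]
                congr 2
                have : u * (h - j) + u * j = u * h := by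
                  rw [← Nat.mul_add]
                  congr 1
                  omega
                omega
      _ = 4^h * (q:ℤ)^(u*h) := by rw [← Finset.sum_mul, ← hbin]
  -- the key smallness inequality
  have key1 : 4^h * (m₁ * (q:ℤ)^(u*(h-1))) < (q:ℤ)^((u-1)*h) := by
    have hDZ : (0:ℤ) < (h:ℤ) * q * (6 * q) ^ h := by positivity
    rw [← mul_lt_mul_iff_left₀ hDZ]
    have e1 : 4^h * (m₁ * (q:ℤ)^(u*(h-1))) * ((h:ℤ) * q * (6 * q) ^ h)
        = (m₁ * ((h:ℤ) * q * (6 * q) ^ h)) * (4^h * (q:ℤ)^(u*(h-1))) := by ring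
    have e2 : (4:ℤ)^h * (q:ℤ)^(u*(h-1)) * (q:ℤ)^u = 4^h * (q:ℤ)^(u*h) := by
      rw [mul_assoc, ← pow_add]
      congr 2
      have : u * (h-1) + u = u * h := by
        rw [← Nat.mul_succ]
        congr 1
        omega
      omega
    have step1 : 4^h * (m₁ * (q:ℤ)^(u*(h-1))) * ((h:ℤ) * q * (6 * q) ^ h)
        < 4^h * (q:ℤ)^(u*h) := by
      rw [e1, ← e2]
      have hpos : (0:ℤ) < 4^h * (q:ℤ)^(u*(h-1)) := by positivity
      calc (m₁ * ((h:ℤ) * q * (6 * q) ^ h)) * (4^h * (q:ℤ)^(u*(h-1)))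
          < (q:ℤ)^u * (4^h * (q:ℤ)^(u*(h-1))) := by
            apply mul_lt_mul_of_pos_right hkey hpos
        _ = 4^h * (q:ℤ)^(u*(h-1)) * (q:ℤ)^u := by ring
    have step2 : (4:ℤ)^h * (q:ℤ)^(u*h) < (q:ℤ)^((u-1)*h) * ((h:ℤ) * q * (6 * q) ^ h) := by
      have e3 : (q:ℤ)^((u-1)*h) * (6:ℤ)^h * (q:ℤ)^h = 6^h * (q:ℤ)^(u*h) := by
        rw [mul_assoc, mul_comm ((6:ℤ)^h), ← mul_assoc, ← pow_add]
        have : (u-1) * h + h = u * h := by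
          rw [← Nat.succ_mul]
          congr 1
          omega
        rw [this]
        ring
      have h46 : (4:ℤ)^h < 6^h := by
        apply pow_lt_pow_left₀ (by norm_num) (by norm_num)
        omega
      have hqh : (0:ℤ) < (q:ℤ)^(u*h) := by positivity
      calc (4:ℤ)^h * (q:ℤ)^(u*h) < 6^h * (q:ℤ)^(u*h) :=
            mul_lt_mul_of_pos_right h46 hqh
        _ = (q:ℤ)^((u-1)*h) * (6:ℤ)^h * (q:ℤ)^h := e3.symm
        _ ≤ (q:ℤ)^((u-1)*h) * ((h:ℤ) * q * (6 * q) ^ h) := by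
            have hhq1 : (1:ℤ) ≤ (h:ℤ) * q := by
              have := mul_le_mul hhZ (by linarith : (1:ℤ) ≤ (q:ℤ)) (by norm_num) (by linarith)
              linarith
            have e4 : ((6:ℤ) * q)^h = 6^h * (q:ℤ)^h := mul_pow _ _ _
            rw [e4]
            calc (q:ℤ)^((u-1)*h) * (6:ℤ)^h * (q:ℤ)^h
                = 1 * ((q:ℤ)^((u-1)*h) * ((6:ℤ)^h * (q:ℤ)^h)) := by ring
              _ ≤ ((h:ℤ) * q) * ((q:ℤ)^((u-1)*h) * ((6:ℤ)^h * (q:ℤ)^h)) := by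
                  apply mul_le_mul_of_nonneg_right hhq1 (by positivity)
              _ = (q:ℤ)^((u-1)*h) * ((h:ℤ) * q * (6^h * (q:ℤ)^h)) := by ring
    linarith
  -- positivity of coefficients 2 ≤ i ≤ 3h
  have hc_pos : ∀ i, 2 ≤ i → i ≤ 3*h → 1 ≤ (t ^ h).coeff i := by
    intro i hi2 hi3
    rw [hcoeff i]
    rw [Finset.sum_range_succ' (fun j =>
      if j ≤ i then (s ^ (h-j)).coeff (i-j) * ((-m₁)^j * (h.choose j : ℤ)) else 0) h]
    have hfirst : (if 0 ≤ i then (s ^ (h-0)).coeff (i-0) * ((-m₁)^0 * (h.choose 0 : ℤ)) else 0)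
        = (s ^ h).coeff i := by norm_num
    rw [hfirst]
    have htail : -(4^h * (m₁ * (q:ℤ)^(u*(h-1)))) ≤ ∑ j ∈ Finset.range h,
        (if j+1 ≤ i then (s ^ (h-(j+1))).coeff (i-(j+1)) * ((-m₁)^(j+1) * (h.choose (j+1) : ℤ)) else 0) := by
      have hstep : ∀ j ∈ Finset.range h,
          -(3^(h-(j+1)) * (h.choose (j+1) : ℤ) * (m₁ * (q:ℤ)^(u*(h-1)))) ≤
          (if j+1 ≤ i then (s ^ (h-(j+1))).coeff (i-(j+1)) * ((-m₁)^(j+1) * (h.choose (j+1) : ℤ)) else 0) := by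
        intro j hj
        have hjh : j + 1 ≤ h := Finset.mem_range.mp hj
        have habs := hterm_le i (j+1) hjh
        have hb : (q:ℤ)^(u*(h-(j+1))) * m₁^(j+1) ≤ m₁ * (q:ℤ)^(u*(h-1)) := by
          have : m₁^(j+1) = m₁ * m₁^j := by ring
          rw [this]
          calc (q:ℤ)^(u*(h-(j+1))) * (m₁ * m₁^j)
              ≤ (q:ℤ)^(u*(h-(j+1))) * (m₁ * ((q:ℤ)^u)^j) := by
                apply mul_le_mul_of_nonneg_left _ (by positivity)
                apply mul_le_mul_of_nonneg_left _ hm₁0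
                exact pow_le_pow_left₀ hm₁0 (le_of_lt hm₁q) j
            _ = m₁ * (q:ℤ)^(u*(h-1)) := by
                rw [← pow_mul]
                rw [show (q:ℤ)^(u*(h-(j+1))) * (m₁ * (q:ℤ)^(u*j)) = m₁ * ((q:ℤ)^(u*(h-(j+1))) * (q:ℤ)^(u*j)) by ring]
                rw [← pow_add]
                congr 2
                have : u * (h-(j+1)) + u * j = u * (h-1) := by
                  rw [← Nat.mul_add]
                  congr 1
                  omega
                omega
        have h2 : |if j+1 ≤ i then (s ^ (h-(j+1))).coeff (i-(j+1)) * ((-m₁)^(j+1) * (h.choose (j+1) : ℤ)) else 0|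
            ≤ 3^(h-(j+1)) * (h.choose (j+1) : ℤ) * (m₁ * (q:ℤ)^(u*(h-1))) := by
          calc _ ≤ 3^(h-(j+1)) * (h.choose (j+1) : ℤ) * ((q:ℤ)^(u*(h-(j+1))) * m₁^(j+1)) := habs
            _ ≤ _ := by
                apply mul_le_mul_of_nonneg_left hb (by positivity)
        have := neg_abs_le (if j+1 ≤ i then (s ^ (h-(j+1))).coeff (i-(j+1)) * ((-m₁)^(j+1) * (h.choose (j+1) : ℤ)) else 0)
        linarith [neg_le_neg h2]
      calc -(4^h * (m₁ * (q:ℤ)^(u*(h-1))))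
          ≤ -((∑ j ∈ Finset.range h, 3^(h-(j+1)) * (h.choose (j+1) : ℤ)) * (m₁ * (q:ℤ)^(u*(h-1)))) := by
            apply neg_le_neg
            apply mul_le_mul_of_nonneg_right _ (by positivity)
            have e := hbin
            rw [Finset.sum_range_succ' (fun j => 3^(h-j) * (h.choose j : ℤ)) h] at e
            have h3h : (0:ℤ) ≤ 3^(h-0) * (h.choose 0 : ℤ) := by positivity
            linarith
        _ = ∑ j ∈ Finset.range h, -(3^(h-(j+1)) * (h.choose (j+1) : ℤ) * (m₁ * (q:ℤ)^(u*(h-1)))) := by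
            rw [Finset.sum_mul, ← Finset.sum_neg_distrib]
        _ ≤ _ := Finset.sum_le_sum hstep
    have hlow' := hlow i hi2 hi3
    have : 0 < (s ^ h).coeff i + ∑ j ∈ Finset.range h,
        (if j+1 ≤ i then (s ^ (h-(j+1))).coeff (i-(j+1)) * ((-m₁)^(j+1) * (h.choose (j+1) : ℤ)) else 0) := by
      linarith
    omega
  -- exact values of coefficients 0 and 1
  have hc0 : (t ^ h).coeff 0 = m₀ ^ h := by
    rw [hcoeff 0]
    rw [Finset.sum_eq_single_of_mem 0 (Finset.mem_range.mpr (by omega))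
      (fun j _ hne => by rw [if_neg (by omega)])]
    have : (s ^ h).coeff 0 = (s.coeff 0) ^ h := by
      have := map_pow (constantCoeff (R := ℤ)) s h
      simpa [constantCoeff_apply] using this
    simp [this, hs0]
  have hc1 : (t ^ h).coeff 1 = -((h:ℤ) * (m₁ * m₀ ^ (h-1))) := by
    rw [hcoeff 1]
    have hsub : Finset.range 2 ⊆ Finset.range (h+1) := by
      apply Finset.range_subset_range.mpr
      omega
    rw [← Finset.sum_subset hsub (fun j _ hj => by rw [if_neg (by simp at hj; omega)])]
    rw [Finset.sum_range_succ, Finset.sum_range_one]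
    have h0 : (if 0 ≤ 1 then (s ^ (h-0)).coeff (1-0) * ((-m₁)^0 * (h.choose 0 : ℤ)) else 0) = 0 := by
      simp [coeff_one_pow_eq_zero s hs1 h]
    have h1 : (if 1 ≤ 1 then (s ^ (h-1)).coeff (1-1) * ((-m₁)^1 * (h.choose 1 : ℤ)) else 0)
        = -((h:ℤ) * (m₁ * m₀ ^ (h-1))) := by
      have : (s ^ (h-1)).coeff 0 = m₀ ^ (h-1) := by
        have := map_pow (constantCoeff (R := ℤ)) s (h-1)
        simp only [constantCoeff_apply] at this
        rw [this, hs0]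
      simp only [if_pos (le_refl 1), Nat.sub_self, this, pow_one, Nat.choose_one_right]
      ring
    rw [h0, h1]
    ring
  have hc1abs : |(t ^ h).coeff 1| = (h:ℤ) * (m₁ * m₀ ^ (h-1)) := by
    rw [hc1, abs_neg, abs_of_nonneg (by positivity)]
  have hc1ge1 : 1 ≤ (h:ℤ) * (m₁ * m₀ ^ (h-1)) := by
    have h1 : (1:ℤ) ≤ m₀ ^ (h-1) := one_le_pow₀ hm₀0
    have h2 : (1:ℤ) ≤ m₁ * m₀ ^ (h-1) := by
      have := mul_le_mul hm₁ h1 (by norm_num) (by linarith)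
      linarith
    have := mul_le_mul hhZ h2 (by norm_num) (by linarith)
    linarith
  -- now the main argument
  intro k hk
  have hq0 : (0:ℤ) < (q:ℤ) := by linarith
  have hqk0 : q ^ k ≠ 0 := by positivity
  have hckq : ∀ i, |(t ^ h).coeff i| < (q:ℤ) ^ k := by
    intro i
    calc |(t ^ h).coeff i| ≤ 4^h * (q:ℤ)^(u*h) := hc_bound i
      _ ≤ (q:ℤ)^(2*h) * (q:ℤ)^(u*h) := by
          apply mul_le_mul_of_nonneg_right _ (by positivity)
          calc (4:ℤ)^h = ((2:ℤ)^2)^h := by norm_num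
            _ ≤ ((q:ℤ)^2)^h := by
                apply pow_le_pow_left₀ (by norm_num)
                nlinarith
            _ = (q:ℤ)^(2*h) := by rw [← pow_mul]
      _ = (q:ℤ)^(2*h + u*h) := by rw [← pow_add]
      _ < (q:ℤ)^k := by
          apply pow_lt_pow_right₀ (by linarith)
          have : u * h = h * u := Nat.mul_comm u h
          omega
  -- degree bound and evaluation
  have hdeg : (t ^ h).natDegree < 3 * h + 1 := by
    have h1 : t.natDegree ≤ 3 := by
      rw [ht]
      compute_degree
    have h2 : (t ^ h).natDegree ≤ h * t.natDegree := natDegree_pow_le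
    have h3 : h * t.natDegree ≤ h * 3 := Nat.mul_le_mul_left h h1
    omega
  have hNsum : (t.eval ((q:ℤ) ^ k)) ^ h
      = ∑ i ∈ Finset.range (3*h+1), (t ^ h).coeff i * ((q:ℤ)^k)^i := by
    rw [← eval_pow]
    exact eval_eq_sum_range' hdeg _
  -- natural number data
  set n0 : ℕ := ((t ^ h).coeff 0).toNat with hn0def
  set n1 : ℕ := ((q:ℤ)^k + (t ^ h).coeff 1).toNat with hn1def
  set n2 : ℕ := ((t ^ h).coeff 2 - 1).toNat with hn2def
  set aa : ℕ := (|(t ^ h).coeff 1| - 1).toNat with haadef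
  have hc1le : (t ^ h).coeff 1 ≤ -1 := by rw [hc1]; linarith
  have hc1gt : -(q:ℤ)^k < (t ^ h).coeff 1 := by
    have := hckq 1
    have := neg_abs_le ((t ^ h).coeff 1)
    linarith
  have hc2ge : 1 ≤ (t ^ h).coeff 2 := hc_pos 2 (le_refl 2) (by omega)
  have hn0 : (n0:ℤ) = (t ^ h).coeff 0 := Int.toNat_of_nonneg (by rw [hc0]; positivity)
  have hn1 : (n1:ℤ) = (q:ℤ)^k + (t ^ h).coeff 1 := Int.toNat_of_nonneg (by linarith)
  have hn2 : (n2:ℤ) = (t ^ h).coeff 2 - 1 := Int.toNat_of_nonneg (by linarith)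
  have haa : (aa:ℤ) = |(t ^ h).coeff 1| - 1 := Int.toNat_of_nonneg (by rw [hc1abs]; linarith)
  have hcast_qk : ((q ^ k : ℕ) : ℤ) = (q:ℤ)^k := by push_cast; ring
  have htoNat_lt : ∀ i, ((t ^ h).coeff i).toNat < q ^ k := by
    intro i
    rw [Int.toNat_lt' (Nat.pos_of_ne_zero hqk0), hcast_qk]
    have := hckq i
    have := le_abs_self ((t ^ h).coeff i)
    linarith
  have hn0lt : n0 < q ^ k := htoNat_lt 0
  have hn1lt : n1 < q ^ k := by
    rw [hn1def, Int.toNat_lt' (Nat.pos_of_ne_zero hqk0), hcast_qk]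
    linarith
  have hn2lt : n2 < q ^ k := by
    rw [hn2def, Int.toNat_lt' (Nat.pos_of_ne_zero hqk0), hcast_qk]
    have := hckq 2
    have := le_abs_self ((t ^ h).coeff 2)
    linarith
  have haalt : aa < q ^ k := by
    rw [haadef, Int.toNat_lt' (Nat.pos_of_ne_zero hqk0), hcast_qk]
    have := hckq 1
    linarith [abs_nonneg ((t ^ h).coeff 1)]
  -- the block decomposition
  set gnat : ℕ → ℕ := fun i => if i = 0 then n0 else if i = 1 then n1 else if i = 2 then n2
    else ((t ^ h).coeff i).toNat with hgnatdef
  have hglt : ∀ i, gnat i < q ^ k := by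
    intro i
    simp only [hgnatdef]
    split_ifs
    · exact hn0lt
    · exact hn1lt
    · exact hn2lt
    · exact htoNat_lt i
  set SN : ℕ := ∑ i ∈ Finset.range (3*h+1), gnat i * q ^ (i*k) with hSNdef
  have hsplit3 : ∀ (F : ℕ → ℤ), ∑ i ∈ Finset.range (3*h+1), F i
      = F 0 + F 1 + F 2 + ∑ i ∈ Finset.Ico 3 (3*h+1), F i := by
    intro F
    rw [Finset.range_eq_Ico, Finset.sum_eq_sum_Ico_succ_bot (by omega : 0 < 3*h+1),
      Finset.sum_eq_sum_Ico_succ_bot (by omega : 1 < 3*h+1),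
      Finset.sum_eq_sum_Ico_succ_bot (by omega : 2 < 3*h+1)]
    ring
  have hSNcast : (SN:ℤ) = (t.eval ((q:ℤ) ^ k)) ^ h := by
    rw [hSNdef, hNsum]
    push_cast
    have e1 : ∀ i : ℕ, ((gnat i : ℤ)) * ((q:ℤ))^(i*k) = (gnat i : ℤ) * ((q:ℤ)^k)^i := by
      intro i
      rw [← pow_mul, Nat.mul_comm]
    calc ∑ i ∈ Finset.range (3*h+1), ((gnat i : ℤ)) * ((q:ℤ))^(i*k)
        = ∑ i ∈ Finset.range (3*h+1), (gnat i : ℤ) * ((q:ℤ)^k)^i :=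
          Finset.sum_congr rfl fun i _ => e1 i
      _ = ∑ i ∈ Finset.range (3*h+1), (t ^ h).coeff i * ((q:ℤ)^k)^i := by
          rw [hsplit3 (fun i => (gnat i : ℤ) * ((q:ℤ)^k)^i),
            hsplit3 (fun i => (t ^ h).coeff i * ((q:ℤ)^k)^i)]
          have ht3 : ∑ i ∈ Finset.Ico 3 (3*h+1), (gnat i : ℤ) * ((q:ℤ)^k)^i
              = ∑ i ∈ Finset.Ico 3 (3*h+1), (t ^ h).coeff i * ((q:ℤ)^k)^i := by
            refine Finset.sum_congr rfl fun i hi => ?_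
            obtain ⟨hi3, hi3h⟩ := Finset.mem_Ico.mp hi
            have : gnat i = ((t ^ h).coeff i).toNat := by
              simp only [hgnatdef]
              rw [if_neg (by omega), if_neg (by omega), if_neg (by omega)]
            rw [this, Int.toNat_of_nonneg (by linarith [hc_pos i (by omega) (by omega)])]
          rw [ht3]
          have hg0 : gnat 0 = n0 := by simp [hgnatdef]
          have hg1 : gnat 1 = n1 := by simp [hgnatdef]
          have hg2 : gnat 2 = n2 := by simp [hgnatdef]
          rw [hg0, hg1, hg2, hn0, hn1, hn2]
          ring
  have hSN : ((t.eval ((q:ℤ) ^ k)) ^ h).toNat = SN := by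
    rw [← hSNcast, Int.toNat_natCast]
  -- digit sums
  have hdigSN : digitSum q SN = ∑ i ∈ Finset.range (3*h+1), digitSum q (gnat i) :=
    digitSum_blocks q k hq (3*h+1) gnat hglt
  have hsplit3' : ∀ (F : ℕ → ℕ), ∑ i ∈ Finset.range (3*h+1), F i
      = F 0 + F 1 + F 2 + ∑ i ∈ Finset.Ico 3 (3*h+1), F i := by
    intro F
    rw [Finset.range_eq_Ico, Finset.sum_eq_sum_Ico_succ_bot (by omega : 0 < 3*h+1),
      Finset.sum_eq_sum_Ico_succ_bot (by omega : 1 < 3*h+1),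
      Finset.sum_eq_sum_Ico_succ_bot (by omega : 2 < 3*h+1)]
    ring
  have hIcoIcc : Finset.Ico 3 (3*h+1) = Finset.Icc 3 (3*h) := by
    rw [Finset.Ico_add_one_right_eq_Icc]
  have hdig2 : digitSum q SN = digitSum q n0 + digitSum q n1 + digitSum q n2
      + ∑ i ∈ Finset.Icc 3 (3*h), digitSum q ((t ^ h).coeff i).toNat := by
    rw [hdigSN, hsplit3' (fun i => digitSum q (gnat i))]
    have hg0 : gnat 0 = n0 := by simp [hgnatdef]
    have hg1 : gnat 1 = n1 := by simp [hgnatdef]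
    have hg2 : gnat 2 = n2 := by simp [hgnatdef]
    rw [hg0, hg1, hg2, hIcoIcc]
    congr 1
    refine Finset.sum_congr rfl fun i hi => ?_
    obtain ⟨hi3, hi3h⟩ := Finset.mem_Icc.mp hi
    congr 1
    simp only [hgnatdef]
    rw [if_neg (by omega), if_neg (by omega), if_neg (by omega)]
  -- n1 is a complement
  have hn1compl : n1 = q ^ k - 1 - aa := by
    have h1 : (n1:ℤ) + aa + 1 = ((q ^ k : ℕ) : ℤ) := by
      rw [hn1, haa, hcast_qk, abs_of_nonpos (by linarith : (t ^ h).coeff 1 ≤ 0)]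
      ring
    have h2 : n1 + aa + 1 = q ^ k := by exact_mod_cast h1
    omega
  have hcompl := digitSum_compl q hq k aa haalt
  rw [← hn1compl] at hcompl
  -- finish
  rw [hSN]
  have hkq : ((k * (q-1) : ℕ) : ℤ) = (k:ℤ) * ((q:ℤ) - 1) := by
    push_cast [Nat.cast_sub (by omega : 1 ≤ q)]
    ring
  have hcompl' : (digitSum q n1 : ℤ) + (digitSum q aa : ℤ) = (k:ℤ) * ((q:ℤ) - 1) := by
    rw [← hkq]
    exact_mod_cast congrArg (Nat.cast : ℕ → ℤ) hcompl
  rw [hM]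
  have hdig2' : (digitSum q SN : ℤ) = (digitSum q n0 : ℤ) + digitSum q n1 + digitSum q n2
      + ∑ i ∈ Finset.Icc 3 (3*h), (digitSum q ((t ^ h).coeff i).toNat : ℤ) := by
    rw [hdig2]
    push_cast
    ring
  rw [hdig2']
  rw [hn2def, haadef, hn0def] at *
  linarith
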